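/- Let n₁, ..., n_k ≥ 2 be integers and let Γ = ℤ[1/(n₁⋯n_k)]. Let N = Σᵢ (1−nᵢ)Γ be the subgroup of Γ generated by the images of multiplication by each (1−nᵢ). Then Γ/N ≅ ℤ/dℤ where d = gcd(n₁−1, ..., n_k−1). -/

import Mathlib

section SteinAux

variable (k : ℕ) (n : Fin k → ℕ)

private lemma stein_Ppos (hn : ∀ i, 2 ≤ n i) : (0:ℝ) < ((∏ i, n i : ℕ) : ℝ) := by
  have : 0 < ∏ i, n i :=
    Finset.prod_pos fun i _ => lt_of_lt_of_le (by norm_num) (hn i)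
  exact_mod_cast this

private lemma stein_mem_aux (hn : ∀ i, 2 ≤ n i) {x : ℝ}
    (hx : x ∈ Subring.closure {(((∏ i, n i : ℕ) : ℝ))⁻¹}) :
    ∃ p : ℤ × ℕ, x = p.1 / ((∏ i, n i : ℕ) : ℝ) ^ p.2 := by
  have hP : (0:ℝ) < ((∏ i, n i : ℕ) : ℝ) := stein_Ppos k n hn
  have hP0 : ((∏ i, n i : ℕ) : ℝ) ≠ 0 := ne_of_gt hP
  have hP2 : (∏ i, (n i : ℝ)) ≠ 0 := by exact_mod_cast hP0
  induction hx using Subring.closure_induction with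
  | mem x hx =>
      obtain rfl : x = (((∏ i, n i : ℕ) : ℝ))⁻¹ := hx
      refine ⟨(1, 1), ?_⟩
      show (((∏ i, n i : ℕ) : ℝ))⁻¹ = ((1 : ℤ) : ℝ) / ((∏ i, n i : ℕ) : ℝ) ^ (1 : ℕ)
      rw [pow_one, Int.cast_one, one_div]
  | zero => exact ⟨(0, 0), by norm_num⟩
  | one => exact ⟨(1, 0), by norm_num⟩
  | add x y hx hy ihx ihy =>
      obtain ⟨⟨a, m⟩, ha⟩ := ihx
      obtain ⟨⟨b, l⟩, hb⟩ := ihy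
      refine ⟨(a * ((∏ i, n i : ℕ) : ℤ) ^ l + b * ((∏ i, n i : ℕ) : ℤ) ^ m, m + l), ?_⟩
      subst ha hb
      push_cast
      field_simp [hP2]
      ring
  | neg x hx ih =>
      obtain ⟨⟨a, m⟩, ha⟩ := ih
      exact ⟨(-a, m), by subst ha; push_cast; ring⟩
  | mul x y hx hy ihx ihy =>
      obtain ⟨⟨a, m⟩, ha⟩ := ihx
      obtain ⟨⟨b, l⟩, hb⟩ := ihy
      refine ⟨(a * b, m + l), ?_⟩
      subst ha hb
      push_cast
      field_simp [hP2]
      ring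

/-- each `n i` is `1` mod `d`. -/
private lemma stein_one (hn : ∀ i, 2 ≤ n i) (i : Fin k) :
    ((n i : ℕ) : ZMod (Finset.univ.gcd fun i => n i - 1)) = 1 := by
  have h1 : n i - 1 + 1 = n i := Nat.sub_add_cancel (le_trans one_le_two (hn i))
  have hdvd : (Finset.univ.gcd fun i => n i - 1) ∣ n i - 1 := Finset.gcd_dvd (Finset.mem_univ i)
  have h0 : ((n i - 1 : ℕ) : ZMod (Finset.univ.gcd fun i => n i - 1)) = 0 :=
    (CharP.cast_eq_zero_iff _ _ _).2 hdvd
  rw [← h1]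
  push_cast
  rw [h0]
  ring

private lemma stein_Pone (hn : ∀ i, 2 ≤ n i) :
    (((∏ i, n i : ℕ) : ℤ) : ZMod (Finset.univ.gcd fun i => n i - 1)) = 1 := by
  push_cast
  simp [stein_one k n hn]

/-- well-definedness of the numerator mod `d`. -/
private lemma stein_key (hn : ∀ i, 2 ≤ n i) {a b : ℤ} {m l : ℕ}
    (h : (a : ℝ) / ((∏ i, n i : ℕ) : ℝ) ^ m = (b : ℝ) / ((∏ i, n i : ℕ) : ℝ) ^ l) :
    (a : ZMod (Finset.univ.gcd fun i => n i - 1)) = b := by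
  have hP : (0:ℝ) < ((∏ i, n i : ℕ) : ℝ) := stein_Ppos k n hn
  have hP0 : ((∏ i, n i : ℕ) : ℝ) ≠ 0 := ne_of_gt hP
  rw [div_eq_div_iff (by positivity) (by positivity)] at h
  have h3 : a * ((∏ i, n i : ℕ) : ℤ) ^ l = b * ((∏ i, n i : ℕ) : ℤ) ^ m := by
    exact_mod_cast h
  have h4 := congrArg (fun z : ℤ => (z : ZMod (Finset.univ.gcd fun i => n i - 1))) h3
  simp only [Int.cast_mul, Int.cast_pow] at h4
  rw [stein_Pone k n hn] at h4
  simpa using h4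

private lemma stein_tel (hn : ∀ i, 2 ≤ n i) (s : Finset (Fin k)) :
    ∀ y ∈ Subring.closure {(((∏ i, n i : ℕ) : ℝ))⁻¹},
      (1 - ∏ i ∈ s, (n i : ℝ)) * y ∈
        ⨆ i : Fin k,
          (Subring.closure {(((∏ i, n i : ℕ) : ℝ))⁻¹} : Subring ℝ).toAddSubgroup.map
            (AddMonoidHom.mulLeft (1 - (n i : ℝ))) := by
  classical
  induction s using Finset.induction with
  | empty => intro y hy; simpa using AddSubgroup.zero_mem _
  | @insert a s ha ih =>
      intro y hy
      have h1 : (1 - ∏ i ∈ insert a s, (n i : ℝ)) * y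
          = (1 - (n a : ℝ)) * y + (1 - ∏ i ∈ s, (n i : ℝ)) * ((n a : ℝ) * y) := by
        rw [Finset.prod_insert ha]; ring
      rw [h1]
      refine AddSubgroup.add_mem _ ?_ (ih _ ?_)
      · exact AddSubgroup.mem_iSup_of_mem a ⟨y, hy, by simp⟩
      · exact Subring.mul_mem _ (natCast_mem _ (n a)) hy

private lemma stein_pow (hn : ∀ i, 2 ≤ n i) (m : ℕ) :
    ∀ y ∈ Subring.closure {(((∏ i, n i : ℕ) : ℝ))⁻¹},
      y - ((∏ i, n i : ℕ) : ℝ) ^ m * y ∈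
        ⨆ i : Fin k,
          (Subring.closure {(((∏ i, n i : ℕ) : ℝ))⁻¹} : Subring ℝ).toAddSubgroup.map
            (AddMonoidHom.mulLeft (1 - (n i : ℝ))) := by
  induction m with
  | zero => intro y hy; simpa using AddSubgroup.zero_mem _
  | succ m ih =>
      intro y hy
      have h1 : y - ((∏ i, n i : ℕ) : ℝ) ^ (m + 1) * y
          = (y - ((∏ i, n i : ℕ) : ℝ) ^ m * y)
            + (1 - ∏ i, (n i : ℝ)) * (((∏ i, n i : ℕ) : ℝ) ^ m * y) := by
        push_cast
        ring
      rw [h1]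
      refine AddSubgroup.add_mem _ (ih y hy) (stein_tel k n hn _ _ ?_)
      exact Subring.mul_mem _ (Subring.pow_mem _ (natCast_mem _ (∏ i, n i)) m) hy

private lemma stein_dmem (hn : ∀ i, 2 ≤ n i) :
    (((Finset.univ.gcd fun i => n i - 1 : ℕ)) : ℝ) ∈
      ⨆ i : Fin k,
        (Subring.closure {(((∏ i, n i : ℕ) : ℝ))⁻¹} : Subring ℝ).toAddSubgroup.map
          (AddMonoidHom.mulLeft (1 - (n i : ℝ))) := by
  set N' : AddSubgroup ℝ :=
    ⨆ i : Fin k,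
      (Subring.closure {(((∏ i, n i : ℕ) : ℝ))⁻¹} : Subring ℝ).toAddSubgroup.map
        (AddMonoidHom.mulLeft (1 - (n i : ℝ))) with hN
  set S : AddSubgroup ℤ := AddSubgroup.comap (Int.castAddHom ℝ) N' with hS
  have hmem : ∀ i, ((n i : ℤ) - 1) ∈ S := by
    intro i
    have h1 : (((n i : ℤ) - 1 : ℤ) : ℝ) = -((1 - (n i : ℝ)) * 1) := by push_cast; ring
    show (((n i : ℤ) - 1 : ℤ) : ℝ) ∈ N'
    rw [h1]
    exact AddSubgroup.neg_mem _
      (AddSubgroup.mem_iSup_of_mem i ⟨1, Subring.one_mem _, by simp⟩)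
  obtain ⟨g, hg⟩ := Int.subgroup_cyclic S
  have hgd : ∀ i, g ∣ (n i : ℤ) - 1 := by
    intro i
    have h2 := hmem i
    rw [hg, AddSubgroup.mem_closure_singleton] at h2
    obtain ⟨c, hc⟩ := h2
    exact ⟨c, by rw [← hc, smul_eq_mul]; ring⟩
  have hgnat : ∀ i, g.natAbs ∣ n i - 1 := by
    intro i
    have h3 : ((g.natAbs : ℤ)) ∣ ((n i - 1 : ℕ) : ℤ) := by
      rw [Int.natAbs_dvd]
      have : ((n i - 1 : ℕ) : ℤ) = (n i : ℤ) - 1 := by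
        have h1 : 1 ≤ n i := le_trans one_le_two (hn i)
        push_cast [h1]
        ring
      rw [this]; exact hgd i
    exact_mod_cast h3
  have hgdvd : g ∣ ((Finset.univ.gcd fun i => n i - 1 : ℕ) : ℤ) := by
    rw [← Int.natAbs_dvd]
    exact_mod_cast Finset.dvd_gcd fun i _ => hgnat i
  have hfin : ((Finset.univ.gcd fun i => n i - 1 : ℕ) : ℤ) ∈ S := by
    rw [hg, AddSubgroup.mem_closure_singleton]
    obtain ⟨c, hc⟩ := hgdvd
    exact ⟨c, by rw [smul_eq_mul, hc]; ring⟩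
  have : ((((Finset.univ.gcd fun i => n i - 1 : ℕ) : ℤ)) : ℝ) ∈ N' := hfin
  exact_mod_cast this

end SteinAux

/-- for integers `n₁,…,n_k ≥ 2`, with `Γ = ℤ[1/(n₁⋯n_k)]` and
`N = Σᵢ (1−nᵢ)Γ`, we have `Γ/N ≅ ℤ/dℤ` where `d = gcd(n₁−1, …, n_k−1)`. -/
theorem stein_integral_H0 (k : ℕ) (hk : 0 < k) (n : Fin k → ℕ) (hn : ∀ i, 2 ≤ n i) :
    Nonempty
      ((↥(Subring.closure {(((∏ i, n i : ℕ) : ℝ))⁻¹} : Subring ℝ).toAddSubgroup ⧸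
          ((⨆ i : Fin k,
              (Subring.closure {(((∏ i, n i : ℕ) : ℝ))⁻¹} : Subring ℝ).toAddSubgroup.map
                (AddMonoidHom.mulLeft (1 - (n i : ℝ)))).addSubgroupOf
            (Subring.closure {(((∏ i, n i : ℕ) : ℝ))⁻¹} : Subring ℝ).toAddSubgroup)) ≃+
        ZMod (Finset.univ.gcd fun i => n i - 1)) := by
  classical
  have hP : (0:ℝ) < ((∏ i, n i : ℕ) : ℝ) := stein_Ppos k n hn
  have hP0 : ((∏ i, n i : ℕ) : ℝ) ≠ 0 := ne_of_gt hP
  set Γ : Subring ℝ := Subring.closure {(((∏ i, n i : ℕ) : ℝ))⁻¹} with hΓ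
  set N' : AddSubgroup ℝ :=
    ⨆ i : Fin k, Γ.toAddSubgroup.map (AddMonoidHom.mulLeft (1 - (n i : ℝ))) with hN
  set d : ℕ := Finset.univ.gcd fun i => n i - 1 with hd
  have hone : ∀ i, ((n i : ℕ) : ZMod d) = 1 := fun i => stein_one k n hn i
  have hP0' : (∏ i, (n i : ℝ)) ≠ 0 := by exact_mod_cast hP0
  have fwd : ∀ x : Γ.toAddSubgroup, ∃ p : ℤ × ℕ, (x : ℝ) = p.1 / ((∏ i, n i : ℕ) : ℝ) ^ p.2 :=
    fun x => stein_mem_aux k n hn x.2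
  let ffun : Γ.toAddSubgroup → ZMod d := fun x => (((fwd x).choose.1 : ℤ) : ZMod d)
  have fval : ∀ (x : Γ.toAddSubgroup) (a : ℤ) (m : ℕ),
      (x : ℝ) = a / ((∏ i, n i : ℕ) : ℝ) ^ m →
      ffun x = a := by
    intro x a m hx
    exact stein_key k n hn ((fwd x).choose_spec.symm.trans hx)
  let f : Γ.toAddSubgroup →+ ZMod d :=
    { toFun := ffun
      map_zero' := by
        have h0 : ((0 : Γ.toAddSubgroup) : ℝ) = ((0 : ℤ) : ℝ) / ((∏ i, n i : ℕ) : ℝ) ^ 0 := by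
          norm_num
        show ffun 0 = 0
        exact (fval 0 0 0 h0).trans (by norm_num)
      map_add' := by
        intro x y
        obtain ⟨⟨a, m⟩, ha⟩ := fwd x
        obtain ⟨⟨b, l⟩, hb⟩ := fwd y
        dsimp only at ha hb
        have hxy : ((x + y : Γ.toAddSubgroup) : ℝ)
            = ((a * ((∏ i, n i : ℕ) : ℤ) ^ l + b * ((∏ i, n i : ℕ) : ℤ) ^ m : ℤ) : ℝ)
              / ((∏ i, n i : ℕ) : ℝ) ^ (m + l) := by
          rw [AddSubgroup.coe_add, ha, hb]
          push_cast
          field_simp [hP0']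
          ring
        show ffun (x + y) = ffun x + ffun y
        rw [fval (x + y) _ _ hxy, fval x a m ha, fval y b l hb]
        push_cast
        simp [hone] }
  have hfval : ∀ (x : Γ.toAddSubgroup) (a : ℤ) (m : ℕ),
      (x : ℝ) = a / ((∏ i, n i : ℕ) : ℝ) ^ m → f x = a := fval
  have hsurj : Function.Surjective f := by
    intro c
    obtain ⟨a, rfl⟩ := ZMod.intCast_surjective c
    refine ⟨⟨(a : ℝ), ?_⟩, ?_⟩
    · exact intCast_mem Γ a
    · exact hfval _ a 0 (by norm_num)
  have hker : f.ker = N'.addSubgroupOf Γ.toAddSubgroup := by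
    ext x
    rw [AddMonoidHom.mem_ker, AddSubgroup.mem_addSubgroupOf]
    constructor
    · intro hx
      obtain ⟨⟨a, m⟩, ha⟩ := fwd x
      have h1 : f x = (a : ZMod d) := hfval x a m ha
      rw [h1] at hx
      obtain ⟨c, hc⟩ := (ZMod.intCast_zmod_eq_zero_iff_dvd a d).1 hx
      have h2 : (x : ℝ) - ((∏ i, n i : ℕ) : ℝ) ^ m * (x : ℝ) ∈ N' :=
        stein_pow k n hn m _ x.2
      have h3 : ((∏ i, n i : ℕ) : ℝ) ^ m * (x : ℝ) = (a : ℝ) := by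
        rw [ha, ← mul_div_assoc, mul_div_cancel_left₀ _ (pow_ne_zero m hP0)]
      have h4 : (a : ℝ) ∈ N' := by
        have h5 : (a : ℝ) = c • (((d : ℕ)) : ℝ) := by
          rw [zsmul_eq_mul, hc]
          push_cast
          ring
        rw [h5]
        exact AddSubgroup.zsmul_mem _ (stein_dmem k n hn) c
      have h7 : ((∏ i, n i : ℕ) : ℝ) ^ m * (x : ℝ) ∈ N' := by rw [h3]; exact h4
      have h8 := AddSubgroup.add_mem _ h2 h7
      simpa using h8
    · intro hx
      refine AddSubgroup.iSup_induction (C := fun z => ∃ hz : z ∈ Γ.toAddSubgroup,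
        f ⟨z, hz⟩ = 0) _ hx ?_ ?_ ?_ |>.elim fun hz h => by
          have : (⟨(x : ℝ), hz⟩ : Γ.toAddSubgroup) = x := Subtype.ext rfl
          rwa [this] at h
      · intro i z hz
        obtain ⟨y, hy, hyz⟩ := hz
        simp only [AddMonoidHom.coe_mulLeft] at hyz
        have hyΓ : y ∈ Γ := hy
        obtain ⟨⟨b, l⟩, hb⟩ := stein_mem_aux k n hn hyΓ
        have hzΓ : z ∈ Γ.toAddSubgroup := by
          rw [← hyz]
          exact Subring.mul_mem _ (Subring.sub_mem _ (Subring.one_mem _)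
            (natCast_mem Γ (n i))) hy
        refine ⟨hzΓ, ?_⟩
        have hz2 : ((⟨z, hzΓ⟩ : Γ.toAddSubgroup) : ℝ)
            = (((1 - (n i : ℤ)) * b : ℤ) : ℝ) / ((∏ i, n i : ℕ) : ℝ) ^ l := by
          show z = _
          rw [← hyz, hb]
          push_cast
          ring
        rw [hfval _ _ _ hz2]
        push_cast
        simp [hone]
      · refine ⟨AddSubgroup.zero_mem _, (hfval _ 0 0 ?_).trans (by norm_num)⟩
        show (0 : ℝ) = ((0 : ℤ) : ℝ) / ((∏ i, n i : ℕ) : ℝ) ^ 0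
        norm_num
      · rintro z w ⟨hz, ez⟩ ⟨hw, ew⟩
        refine ⟨AddSubgroup.add_mem _ hz hw, ?_⟩
        have : (⟨z + w, AddSubgroup.add_mem _ hz hw⟩ : Γ.toAddSubgroup)
            = ⟨z, hz⟩ + ⟨w, hw⟩ := rfl
        rw [this, map_add, ez, ew, add_zero]
  rw [← hker]
  exact ⟨QuotientAddGroup.quotientKerEquivOfSurjective f hsurj⟩
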